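/- Let S = x₁,…,x_s with s > 1 be a sequence in 𝔖 satisfying S ∼ S_{r,x}. Then T = x₂,…,x_s is a principal (+)-admissible sequence on (Γ,σ_{x₁}Λ). Moreover, if S₁⋯S_r and T₁⋯T_q are the canonical forms of S and T respectively, then Supp T_q is the principal filter of (Γ₀,σ_{x₁}Λ) generated by x, and: (a) if x₁ = x, then q = r − 1 and Supp T_i = Supp S_i for 0 < i < r; (b) if x₁ ≠ x, then q = r, Supp T_i = Supp S_i for i ≠ m_S(x₁), and Supp T_i = Supp S_i \ {x₁} for i = m_S(x₁). -/

import Mathlib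

namespace KP

/-! ## Quivers on a fixed vertex set `Fin n`.

An orientation is encoded by `Λ : Fin n → Fin n → ℕ`, where `Λ a b` is the number of
arrows from `a` to `b`.  The underlying graph is recorded by `edges Λ a b = Λ a b + Λ b a`. -/

/-- The orientation `σ_x Λ` obtained by reversing every arrow incident with `x`. -/
def flipO {n : ℕ} (x : Fin n) (Λ : Fin n → Fin n → ℕ) : Fin n → Fin n → ℕ :=
  fun a b => if a = x ∨ b = x then Λ b a else Λ a b

/-- Number of edges of the underlying graph joining `a` and `b`. -/
def edges {n : ℕ} (Λ : Fin n → Fin n → ℕ) (a b : Fin n) : ℕ := Λ a b + Λ b a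

/-- `x` is a sink: no arrow starts at `x`. -/
def IsSink {n : ℕ} (Λ : Fin n → Fin n → ℕ) (x : Fin n) : Prop := ∀ y, Λ x y = 0

/-- `S` is a `(+)`-admissible sequence of vertices on `(Γ, Λ)`. -/
def Admissible {n : ℕ} (Λ : Fin n → Fin n → ℕ) : List (Fin n) → Prop
  | [] => True
  | x :: xs => IsSink Λ x ∧ Admissible (flipO x Λ) xs

/-- The orientation `Λ^S`. -/
def orientAfter {n : ℕ} (Λ : Fin n → Fin n → ℕ) : List (Fin n) → (Fin n → Fin n → ℕ)
  | [] => Λ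
  | x :: xs => orientAfter (flipO x Λ) xs

/-- Elementary move: interchange two consecutive vertices not joined by an edge. -/
inductive SwapRel {n : ℕ} (E : Fin n → Fin n → ℕ) : List (Fin n) → List (Fin n) → Prop
  | swap (l₁ l₂ : List (Fin n)) (a b : Fin n) (h : E a b = 0) :
      SwapRel E (l₁ ++ a :: b :: l₂) (l₁ ++ b :: a :: l₂)

/-- The equivalence `∼` on sequences of vertices: reflexive–transitive closure of the
(symmetric) relation `SwapRel`. -/
def Sim {n : ℕ} (E : Fin n → Fin n → ℕ) : List (Fin n) → List (Fin n) → Prop :=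
  Relation.ReflTransGen (SwapRel E)

/-- The preorder `S ⪯ T` : `T ∼ S ++ U` for some `(+)`-admissible sequence `U` on `(Γ, Λ^S)`. -/
def Preceq {n : ℕ} (Λ : Fin n → Fin n → ℕ) (S T : List (Fin n)) : Prop :=
  ∃ U, Admissible (orientAfter Λ S) U ∧ Sim (edges Λ) T (S ++ U)

/-- Support of a sequence of vertices. -/
def suppOf {n : ℕ} (S : List (Fin n)) : Set (Fin n) := {v | v ∈ S}

/-- The partial order on vertices: `x ≤ y` iff there is a path from `x` to `y` in `(Γ, Λ)`. -/
def PathLE {n : ℕ} (Λ : Fin n → Fin n → ℕ) (x y : Fin n) : Prop :=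
  Relation.ReflTransGen (fun a b => Λ a b ≠ 0) x y

/-- A filter (up-closed set) of the poset `(Γ₀, Λ)`. -/
def IsFilter {n : ℕ} (Λ : Fin n → Fin n → ℕ) (F : Set (Fin n)) : Prop :=
  ∀ x ∈ F, ∀ y, PathLE Λ x y → y ∈ F

/-- The principal filter `⟨x⟩`. -/
def upSet {n : ℕ} (Λ : Fin n → Fin n → ℕ) (x : Fin n) : Set (Fin n) := {y | PathLE Λ x y}

/-- The hull `H_Λ(F)`: the smallest filter containing `F` and every vertex joined
by an edge to a vertex of `F`. -/
def hull {n : ℕ} (Λ : Fin n → Fin n → ℕ) (F : Set (Fin n)) : Set (Fin n) :=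
  {y | ∃ x, (x ∈ F ∨ ∃ z ∈ F, edges Λ z x ≠ 0) ∧ PathLE Λ x y}

/-- `segs` is a canonical form of `S` (Proposition 2.1): `S ∼ S₁S₂⋯S_r`, each segment
consists of distinct vertices, is nonempty, and `Supp S_i = Supp (S_i S_{i+1} ⋯ S_r)`. -/
def Segments {n : ℕ} (Λ : Fin n → Fin n → ℕ) (S : List (Fin n))
    (segs : List (List (Fin n))) : Prop :=
  Admissible Λ segs.flatten ∧ Sim (edges Λ) S segs.flatten ∧
  (∀ seg ∈ segs, seg ≠ [] ∧ seg.Nodup) ∧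
  ∀ i, i < segs.length → suppOf (segs.getD i []) = suppOf ((segs.drop i).flatten)

/-- `J` is (a representative of) the join `S ∨ T` (Definition 2.4):  the canonical form of `J`
has `Supp R_i = Supp S_i ∪ Supp T_i` (out-of-range segments read as `∅`). -/
def IsJoin {n : ℕ} (Λ : Fin n → Fin n → ℕ) (S T J : List (Fin n)) : Prop :=
  ∃ CS CT CJ, Segments Λ S CS ∧ Segments Λ T CT ∧ Segments Λ J CJ ∧
    ∀ i, suppOf (CJ.getD i []) = suppOf (CS.getD i []) ∪ suppOf (CT.getD i [])

/-- `M` is (a representative of) the meet `S ∧ T` (Definition 2.4). -/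
def IsMeet {n : ℕ} (Λ : Fin n → Fin n → ℕ) (S T M : List (Fin n)) : Prop :=
  ∃ CS CT CM, Segments Λ S CS ∧ Segments Λ T CT ∧ Segments Λ M CM ∧
    ∀ i, suppOf (CM.getD i []) = suppOf (CS.getD i []) ∩ suppOf (CT.getD i [])

/-- `S` is (equivalent to) the join `T₁ ∨ ⋯ ∨ T_l` of the list of sequences `Ts`. -/
def IsJoinList {n : ℕ} (Λ : Fin n → Fin n → ℕ) : List (List (Fin n)) → List (Fin n) → Prop
  | [], S => S = []
  | T :: Ts, S => ∃ J, IsJoinList Λ Ts J ∧ IsJoin Λ T J S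

/-- The segments of a canonical form of a principal sequence `S_{r,x}` (Definition 3.1). -/
def PrincipalSegs {n : ℕ} (Λ : Fin n → Fin n → ℕ) (segs : List (List (Fin n)))
    (r : ℕ) (x : Fin n) : Prop :=
  segs.length = r ∧ 0 < r ∧
  (∀ i, i + 1 < r → suppOf (segs.getD i []) = hull Λ (suppOf (segs.getD (i+1) []))) ∧
  suppOf (segs.getD (r-1) []) = upSet Λ x

/-- `S ∼ S_{r,x}`, the principal `(+)`-admissible sequence of size `r` with
`Supp S_r = ⟨x⟩`. -/
def IsPrincipalSeq {n : ℕ} (Λ : Fin n → Fin n → ℕ) (r : ℕ) (x : Fin n)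
    (S : List (Fin n)) : Prop :=
  ∃ segs, Segments Λ S segs ∧ PrincipalSegs Λ segs r x

/-- `S` is a principal `(+)`-admissible sequence. -/
def IsPrincipal {n : ℕ} (Λ : Fin n → Fin n → ℕ) (S : List (Fin n)) : Prop :=
  ∃ r x, IsPrincipalSeq Λ r x S


/-! ## Representations of `(Γ, Λ)` over a field `k`. -/

/-- A (finite-dimensional) representation of the quiver `(Γ, Λ)` over `k`:
the space at vertex `x` is `Fin (d x) → k`, and each arrow carries a linear map. -/
structure Rep (k : Type) [Field k] (n : ℕ) (Λ : Fin n → Fin n → ℕ) where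
  d : Fin n → ℕ
  f : ∀ a b : Fin n, Fin (Λ a b) → ((Fin (d a) → k) →ₗ[k] (Fin (d b) → k))

variable {k : Type} [Field k] {n : ℕ}

/-- A morphism of representations. -/
structure RepHom {Λ : Fin n → Fin n → ℕ} (M N : Rep k n Λ) where
  g : ∀ x, (Fin (M.d x) → k) →ₗ[k] (Fin (N.d x) → k)
  comm : ∀ a b i v, g b (M.f a b i v) = N.f a b i (g a v)

/-- Isomorphism of representations. -/
def RepIso {Λ : Fin n → Fin n → ℕ} (M N : Rep k n Λ) : Prop :=
  ∃ g : ∀ x, (Fin (M.d x) → k) ≃ₗ[k] (Fin (N.d x) → k),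
    ∀ a b i v, g b (M.f a b i v) = N.f a b i (g a v)

/-- The zero representation. -/
def IsZeroRep {Λ : Fin n → Fin n → ℕ} (M : Rep k n Λ) : Prop := ∀ x, M.d x = 0

/-- Cast between the standard spaces. -/
def castL (k : Type) [Field k] {m m' : ℕ} (h : m = m') : (Fin m → k) ≃ₗ[k] (Fin m' → k) :=
  LinearEquiv.funCongrLeft k k (finCongr h.symm)

/-- The splitting `(Fin (m + p) → k) ≃ₗ (Fin m → k) × (Fin p → k)`. -/
def splitL (k : Type) [Field k] (m p : ℕ) : (Fin (m + p) → k) ≃ₗ[k] (Fin m → k) × (Fin p → k) :=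
  (LinearEquiv.funCongrLeft k k finSumFinEquiv).trans
    (LinearEquiv.sumArrowLequivProdArrow _ _ k k)

/-- Direct sum of two representations. -/
def dSum {Λ : Fin n → Fin n → ℕ} (M N : Rep k n Λ) : Rep k n Λ where
  d x := M.d x + N.d x
  f a b i :=
    (splitL k (M.d b) (N.d b)).symm.toLinearMap ∘ₗ
      (LinearMap.prodMap (M.f a b i) (N.f a b i)) ∘ₗ (splitL k (M.d a) (N.d a)).toLinearMap

/-- The zero representation (as an object). -/
def zeroRep (k : Type) [Field k] (n : ℕ) (Λ : Fin n → Fin n → ℕ) : Rep k n Λ where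
  d _ := 0
  f _ _ _ := 0

/-- Direct sum of a list of representations. -/
def dSumList {Λ : Fin n → Fin n → ℕ} (L : List (Rep k n Λ)) : Rep k n Λ :=
  L.foldr dSum (zeroRep k n Λ)

/-- `M` is indecomposable. -/
def Indecomp {Λ : Fin n → Fin n → ℕ} (M : Rep k n Λ) : Prop :=
  ¬ IsZeroRep M ∧ ∀ A B : Rep k n Λ, RepIso M (dSum A B) → IsZeroRep A ∨ IsZeroRep B

/-- `X` is a direct summand of `M`. -/
def IsSummand {Λ : Fin n → Fin n → ℕ} (X M : Rep k n Λ) : Prop :=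
  ∃ Y, RepIso M (dSum X Y)

/-! ### Reflection functors (on objects) -/

/-- Index type of the arrows ending at `x`. -/
abbrev Arin {n : ℕ} (Λ : Fin n → Fin n → ℕ) (x : Fin n) := Σ y : Fin n, Fin (Λ y x)

/-- Index type of the arrows starting at `x`. -/
abbrev Aout {n : ℕ} (Λ : Fin n → Fin n → ℕ) (x : Fin n) := Σ y : Fin n, Fin (Λ x y)

/-- The map `h : ⊕_{a : y → x} V(y) → V(x)` induced by the maps along the arrows ending at `x`. -/
noncomputable def inMap (Λ : Fin n → Fin n → ℕ) (M : Rep k n Λ) (x : Fin n) :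
    ((p : Arin Λ x) → (Fin (M.d p.1) → k)) →ₗ[k] (Fin (M.d x) → k) :=
  ∑ p : Arin Λ x, (M.f p.1 x p.2) ∘ₗ LinearMap.proj p

/-- The map `h' : V(x) → ⊕_{a : x → y} V(y)` induced by the maps along arrows starting at `x`. -/
def outMap (Λ : Fin n → Fin n → ℕ) (M : Rep k n Λ) (x : Fin n) :
    (Fin (M.d x) → k) →ₗ[k] ((p : Aout Λ x) → (Fin (M.d p.1) → k)) :=
  LinearMap.pi fun p => M.f x p.1 p.2

noncomputable def kerEquiv (Λ : Fin n → Fin n → ℕ) (M : Rep k n Λ) (x : Fin n) :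
    LinearMap.ker (inMap Λ M x) ≃ₗ[k]
      (Fin (Module.finrank k (LinearMap.ker (inMap Λ M x))) → k) :=
  (Module.finBasis k _).equivFun

noncomputable def cokerEquiv (Λ : Fin n → Fin n → ℕ) (M : Rep k n Λ) (x : Fin n) :
    (((p : Aout Λ x) → (Fin (M.d p.1) → k)) ⧸ LinearMap.range (outMap Λ M x)) ≃ₗ[k]
      (Fin (Module.finrank k (((p : Aout Λ x) → (Fin (M.d p.1) → k)) ⧸
        LinearMap.range (outMap Λ M x))) → k) :=
  (Module.finBasis k _).equivFun

/-- The positive reflection functor `F_x⁺` (on objects): the space at `x` is replaced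
by the kernel of `inMap`, with the maps along the reversed arrows induced by inclusion
followed by the projections. -/
noncomputable def reflPlus (x : Fin n) (Λ : Fin n → Fin n → ℕ) (M : Rep k n Λ) :
    Rep k n (flipO x Λ) where
  d z := if z = x then Module.finrank k (LinearMap.ker (inMap Λ M x)) else M.d z
  f a b i :=
    if ha : a = x then
      if hb : b = x then 0
      else
        (castL k (if_neg hb).symm).toLinearMap ∘ₗ
          (LinearMap.proj (φ := fun p : Arin Λ x => Fin (M.d p.1) → k)
            (⟨b, Fin.cast (by subst ha; simp [flipO]) i⟩ : Arin Λ x)) ∘ₗ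
          (LinearMap.ker (inMap Λ M x)).subtype ∘ₗ
          (kerEquiv Λ M x).symm.toLinearMap ∘ₗ (castL k (if_pos ha)).toLinearMap
    else
      if hb : b = x then 0
      else
        (castL k (if_neg hb).symm).toLinearMap ∘ₗ
          M.f a b (Fin.cast (by simp [flipO, ha, hb]) i) ∘ₗ
          (castL k (if_neg ha)).toLinearMap

/-- The negative reflection functor `F_x⁻` (on objects), presented as a map from
representations of `(Γ, σ_x Λ)` to representations of `(Γ, Λ)`: the space at `x` is
replaced by the cokernel of `outMap`. -/
noncomputable def reflMinus (x : Fin n) (Λ : Fin n → Fin n → ℕ)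
    (N : Rep k n (flipO x Λ)) : Rep k n Λ where
  d z := if z = x then
      Module.finrank k (((p : Aout (flipO x Λ) x) → (Fin (N.d p.1) → k)) ⧸
        LinearMap.range (outMap (flipO x Λ) N x))
    else N.d z
  f a b i :=
    if hb : b = x then
      if ha : a = x then 0
      else
        (castL k (if_pos hb).symm).toLinearMap ∘ₗ
          (cokerEquiv (flipO x Λ) N x).toLinearMap ∘ₗ
          (LinearMap.range (outMap (flipO x Λ) N x)).mkQ ∘ₗ
          (LinearMap.single k (fun p : Aout (flipO x Λ) x => Fin (N.d p.1) → k)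
            (⟨a, Fin.cast (by subst hb; simp [flipO]) i⟩ : Aout (flipO x Λ) x)) ∘ₗ
          (castL k (if_neg ha)).toLinearMap
    else
      if ha : a = x then 0
      else
        (castL k (if_neg hb).symm).toLinearMap ∘ₗ
          N.f a b (Fin.cast (by simp [flipO, ha, hb]) i) ∘ₗ
          (castL k (if_neg ha)).toLinearMap

/-- `F(S) = F_{x_s}⁺ ⋯ F_{x_1}⁺` applied to a representation. -/
noncomputable def FList : (S : List (Fin n)) → (Λ : Fin n → Fin n → ℕ) → Rep k n Λ →
    Rep k n (orientAfter Λ S)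
  | [], _, M => M
  | x :: xs, Λ, M => FList xs (flipO x Λ) (reflPlus x Λ M)

/-- `S` annihilates `M` : `F(S) M = 0`. -/
def Annihilates (Λ : Fin n → Fin n → ℕ) (S : List (Fin n)) (M : Rep k n Λ) : Prop :=
  IsZeroRep (FList S Λ M)

/-- `M` is preprojective: some `(+)`-admissible sequence annihilates it. -/
def Preprojective (Λ : Fin n → Fin n → ℕ) (M : Rep k n Λ) : Prop :=
  ∃ S, Admissible Λ S ∧ Annihilates Λ S M

/-- `S` is a shortest `(+)`-admissible sequence annihilating `M` : it annihilates `M` and no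
proper subsequence of `S` annihilates `M`.  (This predicate is invariant under `∼`, so it
expresses `S ∼ S_M`.) -/
def IsShortestAnn (Λ : Fin n → Fin n → ℕ) (M : Rep k n Λ) (S : List (Fin n)) : Prop :=
  Admissible Λ S ∧ Annihilates Λ S M ∧
  ∀ S', Admissible Λ S' → Annihilates Λ S' M → Preceq Λ S' S → Sim (edges Λ) S' S

/-- The simple representation `L_x` concentrated at the vertex `x`. -/
def simpleRep (Λ : Fin n → Fin n → ℕ) (x : Fin n) : Rep k n Λ where
  d z := if z = x then 1 else 0
  f _ _ _ := 0

/-- `M(S) = F_{x₁}⁻ F_{x₂}⁻ ⋯ F_{x_{s-1}}⁻ (L_{x_s})`, where `L_{x_s}` is the simple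
(projective) module over `k(Γ, σ_{x_{s-1}} ⋯ σ_{x_1} Λ)` at the vertex `x_s`. -/
noncomputable def Mof : (Λ : Fin n → Fin n → ℕ) → (S : List (Fin n)) → Rep k n Λ
  | Λ, [] => zeroRep k n Λ
  | Λ, [x] => simpleRep Λ x
  | Λ, x :: y :: ys => reflMinus x Λ (Mof (flipO x Λ) (y :: ys))

variable {n : ℕ}

/-! ## The Weyl group -/

/-- The simple reflection `σ_i` attached to a generalized Cartan matrix `A`,
as a linear endomorphism of `ℤⁿ` : `σ_i(v) = v - (∑ l, a_{il} v_l) e_i`. -/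
def sigmaL (A : Fin n → Fin n → ℤ) (i : Fin n) : (Fin n → ℤ) →ₗ[ℤ] (Fin n → ℤ) where
  toFun v := v - (∑ l, A i l * v l) • Pi.single i 1
  map_add' v w := by
    simp only [Pi.add_apply, mul_add, Finset.sum_add_distrib, add_smul]
    abel
  map_smul' c v := by
    simp only [Pi.smul_apply, smul_eq_mul, RingHom.id_apply, smul_sub]
    congr 1
    rw [smul_smul, Finset.mul_sum]
    congr 1
    exact Finset.sum_congr rfl fun l _ => by ring

theorem sigma_invol (A : Fin n → Fin n → ℤ) (hA : ∀ i, A i i = 2) (i : Fin n) :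
    (sigmaL A i).comp (sigmaL A i) = LinearMap.id := by
  apply LinearMap.ext
  intro v
  simp only [LinearMap.comp_apply, LinearMap.id_apply, sigmaL, LinearMap.coe_mk, AddHom.coe_mk]
  set c := ∑ l, A i l * v l with hc
  set s : Fin n → ℤ := Pi.single i 1 with hs
  have h1 : ∑ l, A i l * (v - c • s) l = -c := by
    have h2 : ∀ l, A i l * (v - c • s) l = A i l * v l - c * (A i l * s l) := fun l => by
      simp only [Pi.sub_apply, Pi.smul_apply, smul_eq_mul]
      ring
    rw [Finset.sum_congr rfl fun l _ => h2 l, Finset.sum_sub_distrib, ← Finset.mul_sum]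
    have h3 : ∑ l, A i l * s l = 2 := by
      rw [Finset.sum_eq_single i]
      · simp [hs, hA i]
      · intro b _ hb
        simp [hs, Pi.single_eq_of_ne hb]
      · simp
    rw [h3, ← hc]
    ring
  rw [h1]
  ext j
  simp only [Pi.sub_apply, Pi.smul_apply, smul_eq_mul]
  ring

/-- The simple reflection `σ_i` as an automorphism of `ℤⁿ`. -/
def sigmaE (A : Fin n → Fin n → ℤ) (hA : ∀ i, A i i = 2) (i : Fin n) :
    (Fin n → ℤ) ≃ₗ[ℤ] (Fin n → ℤ) :=
  LinearEquiv.ofLinear (sigmaL A i) (sigmaL A i) (sigma_invol A hA i) (sigma_invol A hA i)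

/-- The length `ℓ(w)`: the least `l ≥ 0` such that `w` is a product of `l` simple
reflections. -/
noncomputable def wordLen (A : Fin n → Fin n → ℤ) (hA : ∀ i, A i i = 2)
    (w : (Fin n → ℤ) ≃ₗ[ℤ] (Fin n → ℤ)) : ℕ :=
  sInf {l | ∃ ys : List (Fin n), ys.length = l ∧ w = (ys.map (sigmaE A hA)).prod}

/-- The word `w(S) = σ_{x_s} ⋯ σ_{x_1}` associated to a sequence `S = x₁, …, x_s`. -/
def wordOf (A : Fin n → Fin n → ℤ) (hA : ∀ i, A i i = 2) (S : List (Fin n)) :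
    (Fin n → ℤ) ≃ₗ[ℤ] (Fin n → ℤ) :=
  ((S.reverse).map (sigmaE A hA)).prod

/-- The symmetric generalized Cartan matrix of the underlying graph of `(Γ, Λ)`. -/
def cartanOf (Λ : Fin n → Fin n → ℕ) : Fin n → Fin n → ℤ :=
  fun i j => if i = j then 2 else -(edges Λ i j : ℤ)

theorem cartan_diag (Λ : Fin n → Fin n → ℕ) : ∀ i, cartanOf Λ i i = 2 := by
  intro i; simp [cartanOf]

/-- The simple reflections of the Weyl group of the underlying graph of `(Γ, Λ)`. -/
def wSig (Λ : Fin n → Fin n → ℕ) : Fin n → ((Fin n → ℤ) ≃ₗ[ℤ] (Fin n → ℤ)) :=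
  sigmaE (cartanOf Λ) (cartan_diag Λ)

/-- `w(S)` for a sequence of vertices of `(Γ, Λ)`. -/
def wordOfSeq (Λ : Fin n → Fin n → ℕ) (S : List (Fin n)) :
    (Fin n → ℤ) ≃ₗ[ℤ] (Fin n → ℤ) :=
  ((S.reverse).map (wSig Λ)).prod

/-- The word `w(S)` is reduced: `ℓ(w(S))` equals the number of letters of `S`. -/
noncomputable def IsReducedSeq (Λ : Fin n → Fin n → ℕ) (S : List (Fin n)) : Prop :=
  wordLen (cartanOf Λ) (cartan_diag Λ) (wordOfSeq Λ S) = S.length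

/-! ## Dynkin graphs of types A, D, E -/

def edgeA (n : ℕ) : Fin n → Fin n → ℕ := fun i j =>
  if (i : ℕ) + 1 = (j : ℕ) ∨ (j : ℕ) + 1 = (i : ℕ) then 1 else 0

def edgeD (n : ℕ) : Fin n → Fin n → ℕ := fun i j =>
  if ((i : ℕ) = 0 ∧ (j : ℕ) = 2) ∨ ((j : ℕ) = 0 ∧ (i : ℕ) = 2) ∨
     ((i : ℕ) = 1 ∧ (j : ℕ) = 2) ∨ ((j : ℕ) = 1 ∧ (i : ℕ) = 2) ∨
     (2 ≤ (i : ℕ) ∧ (i : ℕ) + 1 = (j : ℕ)) ∨ (2 ≤ (j : ℕ) ∧ (j : ℕ) + 1 = (i : ℕ))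
  then 1 else 0

def edgeE (n : ℕ) : Fin n → Fin n → ℕ := fun i j =>
  if ((i : ℕ) + 1 = (j : ℕ) ∧ (j : ℕ) ≤ n - 2) ∨ ((j : ℕ) + 1 = (i : ℕ) ∧ (i : ℕ) ≤ n - 2) ∨
     ((i : ℕ) = 2 ∧ (j : ℕ) = n - 1) ∨ ((j : ℕ) = 2 ∧ (i : ℕ) = n - 1)
  then 1 else 0

/-- The underlying graph (given by its edge-count function `E`) is a Dynkin diagram of
type `A`, `D`, or `E`. -/
def IsDynkinADE (n : ℕ) (E : Fin n → Fin n → ℕ) : Prop :=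
  ∃ e : Fin n ≃ Fin n,
    (∀ i j, E i j = edgeA n (e i) (e j)) ∨
    (4 ≤ n ∧ ∀ i j, E i j = edgeD n (e i) (e j)) ∨
    ((n = 6 ∨ n = 7 ∨ n = 8) ∧ ∀ i j, E i j = edgeE n (e i) (e j))

/-! ## Coxeter-sortable elements -/

/-- Lexicographic comparison of index tuples. -/
def lexLE {s : ℕ} (ι ι' : Fin s → ℕ) : Prop :=
  ι = ι' ∨ ∃ j, (∀ j', j' < j → ι j' = ι' j') ∧ ι j < ι' j

/-- `w` is `c`-sortable for the Coxeter element determined by the half-infinite word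
`cseq` (with dividers every `blockLen` letters): the lexicographically first subsequence
of `cseq` that is a reduced word for `w` defines a sequence of subsets (between adjacent
dividers) that is decreasing under inclusion. -/
def CSortable (A : Fin n → Fin n → ℤ) (hA : ∀ i, A i i = 2) (cseq : ℕ → Fin n)
    (blockLen : ℕ) (w : (Fin n → ℤ) ≃ₗ[ℤ] (Fin n → ℤ)) : Prop :=
  ∃ (s : ℕ) (ι : Fin s → ℕ), StrictMono ι ∧
    w = ((List.ofFn fun j => cseq (ι j)).map (sigmaE A hA)).prod ∧
    wordLen A hA w = s ∧
    (∀ ι' : Fin s → ℕ, StrictMono ι' →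
      w = ((List.ofFn fun j => cseq (ι' j)).map (sigmaE A hA)).prod → lexLE ι ι') ∧
    ∀ m : ℕ, {a : Fin n | ∃ j, (ι j) / blockLen = m + 1 ∧ cseq (ι j) = a} ⊆
             {a : Fin n | ∃ j, (ι j) / blockLen = m ∧ cseq (ι j) = a}


/-- A nonzero non-isomorphism between representations. -/
def RepStep {k : Type} [Field k] {n : ℕ} {Λ : Fin n → Fin n → ℕ} (X Y : Rep k n Λ) : Prop :=
  ∃ f : RepHom X Y, (∃ x v, f.g x v ≠ 0) ∧ ¬ ∀ x, Function.Bijective (f.g x)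

/-- `v` is a minimal element of `D` in the poset `(Γ₀, Λ)`. -/
def MinimalIn {n : ℕ} (Λ : Fin n → Fin n → ℕ) (D : Set (Fin n)) (v : Fin n) : Prop :=
  v ∈ D ∧ ∀ u ∈ D, PathLE Λ u v → u = v

/-- The pairs `(h, v)` of Proposition 3.2(a): `0 < h ≤ r` and `v` a minimal element of
`Supp S_h \ H_Λ(Supp S_{h+1})` (with `Supp S_{r+1} = ∅`). -/
def JoinPair {n : ℕ} (Λ : Fin n → Fin n → ℕ) (segs : List (List (Fin n)))
    (p : ℕ × Fin n) : Prop :=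
  0 < p.1 ∧ p.1 ≤ segs.length ∧
  MinimalIn Λ (suppOf (segs.getD (p.1 - 1) []) \ hull Λ (suppOf (segs.getD p.1 []))) p.2

section Infra

variable {n : ℕ}

theorem edges_comm (Λ : Fin n → Fin n → ℕ) (a b : Fin n) : edges Λ a b = edges Λ b a :=
  Nat.add_comm _ _

theorem edges_flipO (x : Fin n) (Λ : Fin n → Fin n → ℕ) : edges (flipO x Λ) = edges Λ := by
  funext a b
  unfold edges flipO
  by_cases ha : a = x <;> by_cases hb : b = x <;> simp [ha, hb, Nat.add_comm]

theorem flipO_ne {x a b : Fin n} (Λ : Fin n → Fin n → ℕ) (ha : a ≠ x) (hb : b ≠ x) :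
    flipO x Λ a b = Λ a b := by
  simp [flipO, ha, hb]

theorem admissible_cons {Λ : Fin n → Fin n → ℕ} {z : Fin n} {W : List (Fin n)} :
    Admissible Λ (z :: W) ↔ IsSink Λ z ∧ Admissible (flipO z Λ) W := Iff.rfl

theorem orientAfter_cons (Λ : Fin n → Fin n → ℕ) (z : Fin n) (W : List (Fin n)) :
    orientAfter Λ (z :: W) = orientAfter (flipO z Λ) W := rfl

theorem edges_orientAfter (Λ : Fin n → Fin n → ℕ) (W : List (Fin n)) :
    edges (orientAfter Λ W) = edges Λ := by
  induction W generalizing Λ with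
  | nil => rfl
  | cons z W ih => rw [orientAfter_cons, ih, edges_flipO]

theorem orientAfter_ne {W : List (Fin n)} (Λ : Fin n → Fin n → ℕ) {a b : Fin n}
    (ha : a ∉ W) (hb : b ∉ W) : orientAfter Λ W a b = Λ a b := by
  induction W generalizing Λ with
  | nil => rfl
  | cons z W ih =>
      rw [orientAfter_cons,
        ih _ (fun h => ha (List.mem_cons_of_mem _ h)) (fun h => hb (List.mem_cons_of_mem _ h)),
        flipO_ne Λ (fun h => ha (by rw [h]; exact List.mem_cons_self))
          (fun h => hb (by rw [h]; exact List.mem_cons_self))]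

theorem orientAfter_append (Λ : Fin n → Fin n → ℕ) (A B : List (Fin n)) :
    orientAfter Λ (A ++ B) = orientAfter (orientAfter Λ A) B := by
  induction A generalizing Λ with
  | nil => rfl
  | cons z A ih => simp [orientAfter_cons, ih]

theorem admissible_append {Λ : Fin n → Fin n → ℕ} {A B : List (Fin n)} :
    Admissible Λ (A ++ B) ↔ Admissible Λ A ∧ Admissible (orientAfter Λ A) B := by
  induction A generalizing Λ with
  | nil => simp [Admissible, orientAfter]
  | cons z A ih => simp [List.cons_append, admissible_cons, ih, orientAfter_cons, and_assoc]

theorem flipO_comm {Λ : Fin n → Fin n → ℕ} {a b : Fin n} (h1 : Λ a b = 0) (h2 : Λ b a = 0) :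
    flipO a (flipO b Λ) = flipO b (flipO a Λ) := by
  funext u v
  unfold flipO
  by_cases hua : u = a <;> by_cases hub : u = b <;> by_cases hva : v = a <;>
    by_cases hvb : v = b <;> simp_all

theorem isSink_flip_iff {Λ : Fin n → Fin n → ℕ} {a b : Fin n} (hne : b ≠ a)
    (hab : Λ a b = 0) (hba : Λ b a = 0) : IsSink (flipO a Λ) b ↔ IsSink Λ b := by
  constructor <;> intro h y
  · by_cases hy : y = a
    · exact hy ▸ hba
    · have := h y; rwa [flipO_ne Λ hne hy] at this
  · by_cases hy : y = a
    · subst hy; simp [flipO, hab]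
    · rw [flipO_ne Λ hne hy]; exact h y

end Infra

section SimInfra

variable {n : ℕ}

theorem admissible_swap {Λ : Fin n → Fin n → ℕ} {l₁ l₂ : List (Fin n)} {a b : Fin n}
    (h : edges Λ a b = 0) (hadm : Admissible Λ (l₁ ++ a :: b :: l₂)) :
    Admissible Λ (l₁ ++ b :: a :: l₂) := by
  rcases eq_or_ne a b with rfl | hne
  · exact hadm
  rw [admissible_append] at hadm ⊢
  refine ⟨hadm.1, ?_⟩
  set Λ' := orientAfter Λ l₁ with hΛ'
  have he : edges Λ' a b = 0 := by rw [hΛ', edges_orientAfter]; exact h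
  obtain ⟨ha, hb, hrest⟩ : IsSink Λ' a ∧ IsSink (flipO a Λ') b ∧
      Admissible (flipO b (flipO a Λ')) l₂ := by
    have h2 := hadm.2
    rw [admissible_cons] at h2
    exact ⟨h2.1, h2.2.1, h2.2.2⟩
  have hab : Λ' a b = 0 := ha b
  have hba : Λ' b a = 0 := by unfold edges at he; omega
  have hbs : IsSink Λ' b := (isSink_flip_iff hne.symm hab hba).1 hb
  have has : IsSink (flipO b Λ') a := (isSink_flip_iff hne hba hab).2 ha
  rw [admissible_cons]
  exact ⟨hbs, has, by rwa [flipO_comm hab hba]⟩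

theorem sim_admissible {Λ : Fin n → Fin n → ℕ} {W W' : List (Fin n)}
    (h : Sim (edges Λ) W W') (hadm : Admissible Λ W) : Admissible Λ W' := by
  induction h with
  | refl => exact hadm
  | tail _ hstep ih =>
      cases hstep with
      | swap l₁ l₂ a b he => exact admissible_swap he ih

theorem swapRel_perm {E : Fin n → Fin n → ℕ} {W W' : List (Fin n)} (h : SwapRel E W W') :
    W.Perm W' := by
  cases h with
  | swap l₁ l₂ a b _ => exact List.Perm.append_left _ (List.Perm.swap _ _ _)

theorem sim_perm {E : Fin n → Fin n → ℕ} {W W' : List (Fin n)} (h : Sim E W W') : W.Perm W' := by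
  induction h with
  | refl => exact List.Perm.refl _
  | tail _ hstep ih => exact ih.trans (swapRel_perm hstep)

theorem sim_symm {E : Fin n → Fin n → ℕ} (hE : ∀ a b, E a b = E b a) {W W' : List (Fin n)}
    (h : Sim E W W') : Sim E W' W := by
  induction h with
  | refl => exact Relation.ReflTransGen.refl
  | tail _ hstep ih =>
      refine Relation.ReflTransGen.trans ?_ ih
      cases hstep with
      | swap l₁ l₂ a b he =>
          exact Relation.ReflTransGen.single (SwapRel.swap l₁ l₂ b a (by rw [hE]; exact he))

theorem swapRel_context {E : Fin n → Fin n → ℕ} {U V : List (Fin n)} (X Y : List (Fin n))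
    (h : SwapRel E U V) : SwapRel E (X ++ U ++ Y) (X ++ V ++ Y) := by
  cases h with
  | swap l₁ l₂ a b he =>
      have := SwapRel.swap (X ++ l₁) (l₂ ++ Y) a b he
      simpa [List.append_assoc] using this

theorem sim_context {E : Fin n → Fin n → ℕ} {U V : List (Fin n)} (X Y : List (Fin n))
    (h : Sim E U V) : Sim E (X ++ U ++ Y) (X ++ V ++ Y) := by
  induction h with
  | refl => exact Relation.ReflTransGen.refl
  | tail _ hstep ih => exact ih.tail (swapRel_context X Y hstep)

theorem sim_cons {E : Fin n → Fin n → ℕ} {U V : List (Fin n)} (z : Fin n)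
    (h : Sim E U V) : Sim E (z :: U) (z :: V) := by
  simpa using sim_context [z] [] h

theorem sim_append_left {E : Fin n → Fin n → ℕ} {U V : List (Fin n)} (X : List (Fin n))
    (h : Sim E U V) : Sim E (X ++ U) (X ++ V) := by
  simpa using sim_context X [] h

theorem sim_slide {E : Fin n → Fin n → ℕ} {z : Fin n} {B : List (Fin n)}
    (hB : ∀ b ∈ B, E z b = 0) (X Y : List (Fin n)) :
    Sim E (X ++ z :: (B ++ Y)) (X ++ B ++ z :: Y) := by
  induction B generalizing X with
  | nil => simp only [List.nil_append, List.append_nil]; exact Relation.ReflTransGen.refl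
  | cons b B ih =>
      have step : SwapRel E (X ++ z :: b :: (B ++ Y)) (X ++ b :: z :: (B ++ Y)) :=
        SwapRel.swap X (B ++ Y) z b (hB b (List.mem_cons_self))
      refine Relation.ReflTransGen.head step ?_
      have := ih (fun c hc => hB c (List.mem_cons_of_mem _ hc)) (X ++ [b])
      unfold Sim at this
      simpa [List.append_assoc] using this

theorem swapRel_elim {E : Fin n → Fin n → ℕ} {W W' : List (Fin n)} (h : SwapRel E W W') :
    ∃ l₁ l₂ a b, E a b = 0 ∧ W = l₁ ++ a :: b :: l₂ ∧ W' = l₁ ++ b :: a :: l₂ := by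
  cases h with
  | swap l₁ l₂ a b he => exact ⟨l₁, l₂, a, b, he, rfl, rfl⟩

theorem sim_head_decomp {E : Fin n → Fin n → ℕ} (hE : ∀ a b, E a b = E b a) {x₁ : Fin n}
    {T W : List (Fin n)} (h : Sim E (x₁ :: T) W) :
    ∃ P Q, W = P ++ x₁ :: Q ∧ (∀ z ∈ P, E z x₁ = 0) ∧ Sim E T (P ++ Q) := by
  induction h with
  | refl => exact ⟨[], T, rfl, by simp, Relation.ReflTransGen.refl⟩
  | tail _ hstep ih =>
      obtain ⟨P, Q, rfl, hP, hsim⟩ := ih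
      obtain ⟨l₁, l₂, a, b, he, heq, rfl⟩ := swapRel_elim hstep
      rcases List.append_eq_append_iff.1 heq with ⟨M, hl₁, hQM⟩ | ⟨M, hPM, hM⟩
      · cases M with
        | nil =>
            simp only [List.nil_append, List.cons.injEq] at hQM
            obtain ⟨rfl, rfl⟩ := hQM
            simp only [List.append_nil] at hl₁
            refine ⟨P ++ [b], l₂, by simp [hl₁], ?_, by simpa using hsim⟩
            intro z hz
            rcases List.mem_append.1 hz with hz | hz
            · exact hP z hz
            · simp at hz; subst hz; rw [hE]; exact he
        | cons m M =>
            simp only [List.cons_append, List.cons.injEq] at hQM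
            obtain ⟨rfl, rfl⟩ := hQM
            refine ⟨P, M ++ b :: a :: l₂, by simp [hl₁], hP, ?_⟩
            refine Relation.ReflTransGen.tail (by unfold Sim at hsim; simpa using hsim) ?_
            have := SwapRel.swap (P ++ M) l₂ a b he
            simpa [List.append_assoc] using this
      · cases M with
        | nil =>
            simp only [List.nil_append, List.cons.injEq] at hM
            obtain ⟨rfl, rfl⟩ := hM
            simp only [List.append_nil] at hPM
            refine ⟨l₁ ++ [b], l₂, by simp, ?_, by simpa [hPM] using hsim⟩
            intro z hz
            rcases List.mem_append.1 hz with hz | hz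
            · exact hP z (by simp [hPM, hz])
            · simp at hz; subst hz; rw [hE]; exact he
        | cons m M' =>
            cases M' with
            | nil =>
                simp only [List.cons_append, List.nil_append, List.cons.injEq] at hM
                obtain ⟨rfl, rfl, rfl⟩ := hM
                refine ⟨l₁, a :: l₂, by simp, ?_, by simpa [hPM] using hsim⟩
                intro z hz
                exact hP z (by simp [hPM, hz])
            | cons m2 M'' =>
                simp only [List.cons_append, List.cons.injEq] at hM
                obtain ⟨rfl, rfl, rfl⟩ := hM
                refine ⟨l₁ ++ b :: a :: M'', Q, by simp, ?_, ?_⟩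
                · intro z hz
                  apply hP z
                  rw [hPM]
                  simp only [List.mem_append, List.mem_cons] at hz ⊢
                  tauto
                · refine Relation.ReflTransGen.tail
                    (show Sim E T (l₁ ++ a :: b :: (M'' ++ Q)) by
                      simpa [hPM, List.append_assoc] using hsim) ?_
                  have := SwapRel.swap l₁ (M'' ++ Q) a b he
                  simpa [List.append_assoc] using this

end SimInfra

section GapCount

variable {n : ℕ}

theorem gap_lemma {Λ : Fin n → Fin n → ℕ} {A B C : List (Fin n)} {z y : Fin n}
    (hadm : Admissible Λ (A ++ z :: (B ++ z :: C))) (hzB : z ∉ B)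
    (he : edges Λ z y ≠ 0) : y ∈ B := by
  by_contra hyB
  have h1 : Admissible (orientAfter Λ A) (z :: (B ++ z :: C)) := (admissible_append.1 hadm).2
  rw [admissible_cons] at h1
  obtain ⟨hs1, h2⟩ := h1
  have h3 := (admissible_append.1 h2).2
  rw [admissible_cons] at h3
  have hs2 : IsSink (orientAfter (flipO z (orientAfter Λ A)) B) z := h3.1
  set Λ0 := orientAfter Λ A with hΛ0
  have e1 : orientAfter (flipO z Λ0) B z y = flipO z Λ0 z y := orientAfter_ne _ hzB hyB
  have e2 : flipO z Λ0 z y = Λ0 y z := by simp [flipO]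
  have h4 : Λ0 y z = 0 := by rw [← e2, ← e1]; exact hs2 y
  have h5 : Λ0 z y = 0 := hs1 y
  have h6 : edges Λ0 z y = 0 := by unfold edges; omega
  rw [hΛ0, edges_orientAfter] at h6
  exact he h6

theorem exists_first_split {z : Fin n} {C : List (Fin n)} (h : z ∈ C) :
    ∃ B C', C = B ++ z :: C' ∧ z ∉ B := by
  induction C with
  | nil => cases h
  | cons c C ih =>
      by_cases hc : c = z
      · exact ⟨[], C, by rw [hc]; rfl, by simp⟩
      · rcases List.mem_cons.1 h with h | h
        · exact absurd h.symm hc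
        · obtain ⟨B, C', rfl, hB⟩ := ih h
          exact ⟨c :: B, C', rfl, by simp [hB, Ne.symm hc]⟩

theorem count_lead : ∀ (k : ℕ) (Λ : Fin n → Fin n → ℕ) (C : List (Fin n)) (a b : Fin n),
    C.length ≤ k → Admissible Λ (a :: C) → edges Λ a b ≠ 0 →
    C.count a ≤ C.count b := by
  intro k
  induction k with
  | zero =>
      intro Λ C a b hl _ _
      have : C = [] := List.length_eq_zero_iff.1 (Nat.le_zero.1 hl)
      simp [this]
  | succ k ih =>
      intro Λ C a b hl hadm he
      by_cases haC : a ∈ C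
      · obtain ⟨B, C', rfl, hB⟩ := exists_first_split haC
        have hb : b ∈ B := by
          refine gap_lemma (A := ([] : List (Fin n))) (C := C') ?_ hB he
          simpa using hadm
        have hab : a ≠ b := fun h => (h ▸ hB) hb
        have hsuf : Admissible (orientAfter Λ (a :: B)) (a :: C') := by
          have h0 : Admissible Λ ((a :: B) ++ a :: C') := by simpa using hadm
          exact (admissible_append.1 h0).2
        have hrec : C'.count a ≤ C'.count b := by
          refine ih _ C' a b ?_ hsuf (by rwa [edges_orientAfter])
          simp only [List.length_append, List.length_cons] at hl
          omega
        have hcb : 1 ≤ B.count b := List.count_pos_iff.2 hb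
        have hca : B.count a = 0 := List.count_eq_zero.2 hB
        simp only [List.count_append, List.count_cons_self, List.count_cons_of_ne hab,
          List.count_cons_of_ne (Ne.symm hab), hca]
        omega
      · simp [List.count_eq_zero.2 haC]

theorem count_follow {Λ : Fin n → Fin n → ℕ} {a b : Fin n} {Q : List (Fin n)}
    (hadm : Admissible Λ (a :: Q)) (he : edges Λ a b ≠ 0) (hab : a ≠ b) :
    (a :: Q).count b ≤ (a :: Q).count a := by
  by_cases hbQ : b ∈ Q
  · obtain ⟨B, Q', rfl, hB⟩ := exists_first_split hbQ
    have hsuf : Admissible (orientAfter Λ (a :: B)) (b :: Q') := by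
      have h0 : Admissible Λ ((a :: B) ++ b :: Q') := by simpa using hadm
      exact (admissible_append.1 h0).2
    have hrec : Q'.count b ≤ Q'.count a :=
      count_lead Q'.length _ Q' b a le_rfl hsuf
        (by rw [edges_orientAfter, edges_comm]; exact he)
    have hcb : B.count b = 0 := List.count_eq_zero.2 hB
    simp only [List.count_append, List.count_cons_self, List.count_cons_of_ne hab,
      List.count_cons_of_ne (Ne.symm hab), hcb]
    omega
  · have : (a :: Q).count b = 0 := by
      refine List.count_eq_zero.2 ?_
      simp [hbQ, Ne.symm hab]
    simp [this]

end GapCount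

section SegStar

variable {n : ℕ}

theorem mem_suppOf {v : Fin n} {L : List (Fin n)} : v ∈ suppOf L ↔ v ∈ L := Iff.rfl

theorem seg_mem_iff :
    ∀ (segs : List (List (Fin n))),
    (∀ seg ∈ segs, seg ≠ [] ∧ seg.Nodup) →
    (∀ i, i < segs.length → suppOf (segs.getD i []) = suppOf ((segs.drop i).flatten)) →
    ∀ i v, i < segs.length → (v ∈ segs.getD i [] ↔ i < segs.flatten.count v) := by
  intro segs
  induction segs with
  | nil => intro _ _ i v hi; simp at hi
  | cons L rest ih =>
      intro hper hnest i v hi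
      have nest0 : suppOf L = suppOf (L ++ rest.flatten) := by
        have := hnest 0 (by simp)
        simpa using this
      have memL : ∀ w : Fin n, w ∈ L ↔ w ∈ L ++ rest.flatten := fun w => by
        rw [← mem_suppOf, nest0, mem_suppOf]
      have hLnd : L.Nodup := (hper L (List.mem_cons_self)).2
      have hcL : L.count v ≤ 1 := List.nodup_iff_count_le_one.1 hLnd v
      cases i with
      | zero =>
          simp only [List.getD_cons_zero, List.flatten_cons, List.count_append]
          constructor
          · intro hv
            have : 1 ≤ L.count v := List.count_pos_iff.2 hv
            omega
          · intro hv
            refine (memL v).2 ?_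
            rw [← List.count_pos_iff, List.count_append]
            omega
      | succ i =>
          have hi' : i < rest.length := by simpa using hi
          have ihr := ih (fun seg hs => hper seg (List.mem_cons_of_mem _ hs))
            (fun j hj => by
              have := hnest (j+1) (by simpa using hj)
              simpa using this) i v hi'
          simp only [List.getD_cons_succ, List.flatten_cons, List.count_append]
          constructor
          · intro hv
            have h1 : i < rest.flatten.count v := ihr.1 hv
            have hmem : rest.getD i [] ∈ rest := by
              rw [List.getD_eq_getElem _ _ hi']
              exact List.getElem_mem _
            have h2 : v ∈ rest.flatten := List.mem_flatten.2 ⟨_, hmem, hv⟩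
            have h3 : v ∈ L := (memL v).2 (List.mem_append.2 (Or.inr h2))
            have : 1 ≤ L.count v := List.count_pos_iff.2 h3
            omega
          · intro hv
            exact ihr.2 (by omega)

theorem seg_count_le : ∀ (segs : List (List (Fin n))),
    (∀ seg ∈ segs, seg.Nodup) → ∀ v : Fin n, segs.flatten.count v ≤ segs.length := by
  intro segs
  induction segs with
  | nil => simp
  | cons L rest ih =>
      intro hper v
      have h1 : L.count v ≤ 1 := List.nodup_iff_count_le_one.1 (hper L (List.mem_cons_self)) v
      have h2 := ih (fun s hs => hper s (List.mem_cons_of_mem _ hs)) v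
      simp only [List.flatten_cons, List.count_append, List.length_cons]
      omega

theorem segments_mem_iff {Λ : Fin n → Fin n → ℕ} {W : List (Fin n)} {segs : List (List (Fin n))}
    (hseg : Segments Λ W segs) {i : ℕ} (hi : i < segs.length) (v : Fin n) :
    v ∈ segs.getD i [] ↔ i < W.count v := by
  rw [(sim_perm hseg.2.1).count_eq v]
  exact seg_mem_iff segs hseg.2.2.1 hseg.2.2.2 i v hi

theorem segments_count_le {Λ : Fin n → Fin n → ℕ} {W : List (Fin n)} {segs : List (List (Fin n))}
    (hseg : Segments Λ W segs) (v : Fin n) : W.count v ≤ segs.length := by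
  rw [(sim_perm hseg.2.1).count_eq v]
  exact seg_count_le segs (fun s hs => (hseg.2.2.1 s hs).2) v

theorem segments_exists_max {Λ : Fin n → Fin n → ℕ} {W : List (Fin n)}
    {segs : List (List (Fin n))} (hseg : Segments Λ W segs) (hne : segs ≠ []) :
    ∃ v, segs.length ≤ W.count v := by
  have hlen : 0 < segs.length := List.length_pos_iff.2 hne
  have hlast : segs.getD (segs.length - 1) [] ∈ segs := by
    rw [List.getD_eq_getElem _ _ (by omega)]
    exact List.getElem_mem _
  obtain ⟨hne', _⟩ := hseg.2.2.1 _ hlast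
  obtain ⟨v, hv⟩ := List.exists_mem_of_ne_nil _ hne'
  have := (segments_mem_iff hseg (by omega) v).1 hv
  exact ⟨v, by omega⟩

end SegStar

section CanonExist

variable {n : ℕ}

theorem insert_seg : ∀ (segs : List (List (Fin n))) (Λ : Fin n → Fin n → ℕ) (z : Fin n),
    Admissible Λ (z :: segs.flatten) →
    (∀ seg ∈ segs, seg ≠ [] ∧ seg.Nodup) →
    (∀ i, i < segs.length → suppOf (segs.getD i []) = suppOf ((segs.drop i).flatten)) →
    ∃ segs' : List (List (Fin n)), (∀ seg ∈ segs', seg ≠ [] ∧ seg.Nodup) ∧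
      (∀ i, i < segs'.length → suppOf (segs'.getD i []) = suppOf ((segs'.drop i).flatten)) ∧
      Sim (edges Λ) (z :: segs.flatten) segs'.flatten := by
  intro segs
  induction segs with
  | nil =>
      intro Λ z _ _ _
      refine ⟨[[z]], ?_, ?_, ?_⟩
      · intro seg hs; simp at hs; subst hs; simp
      · intro i hi
        simp at hi
        subst hi
        rfl
      · simp only [List.flatten_nil, List.flatten_cons, List.append_nil]
        exact Relation.ReflTransGen.refl
  | cons L rest ih =>
      intro Λ z hadm hper hnest
      have hLnd : L.Nodup := (hper L (List.mem_cons_self)).2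
      have nest0 : suppOf L = suppOf (L ++ rest.flatten) := by
        have := hnest 0 (by simp); simpa using this
      have memL : ∀ w : Fin n, w ∈ L ↔ w ∈ L ++ rest.flatten := fun w => by
        rw [← mem_suppOf, nest0, mem_suppOf]
      have hper_rest : ∀ seg ∈ rest, seg ≠ [] ∧ seg.Nodup :=
        fun seg hs => hper seg (List.mem_cons_of_mem _ hs)
      have hnest_rest : ∀ i, i < rest.length →
          suppOf (rest.getD i []) = suppOf ((rest.drop i).flatten) := fun j hj => by
        have := hnest (j+1) (by simpa using hj)
        simpa using this
      by_cases hzL : z ∈ L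
      · obtain ⟨A, B, hL, hzA⟩ := exists_first_split hzL
        have hndAB : (A ++ z :: B).Nodup := hL ▸ hLnd
        have hzB : z ∉ B := by
          have h1 : (z :: B).Nodup := (List.nodup_append.1 hndAB).2.1
          exact (List.nodup_cons.1 h1).1
        have hBn : ∀ b ∈ B, edges Λ z b = 0 := by
          intro b hb
          by_contra he
          have hword : Admissible Λ (([] : List (Fin n)) ++ z :: (A ++ z :: (B ++ rest.flatten))) := by
            simpa [hL, List.append_assoc] using hadm
          have hbA : b ∈ A := gap_lemma hword hzA he
          exact ((List.nodup_append.1 hndAB).2.2 b hbA b (List.mem_cons_of_mem _ hb)) rfl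
        have hslide : Sim (edges Λ) (z :: (L :: rest).flatten)
            ((z :: (A ++ B)) ++ z :: rest.flatten) := by
          have hs := sim_slide (E := edges Λ) hBn (z :: A) rest.flatten
          have e1 : z :: (L :: rest).flatten = (z :: A) ++ z :: (B ++ rest.flatten) := by
            simp [hL, List.append_assoc]
          have e2 : (z :: (A ++ B)) ++ z :: rest.flatten
              = (z :: A) ++ B ++ z :: rest.flatten := by
            simp [List.append_assoc]
          rw [e1, e2]
          exact hs
        have hadm2 : Admissible Λ ((z :: (A ++ B)) ++ z :: rest.flatten) :=
          sim_admissible hslide hadm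
        have hsuf : Admissible (orientAfter Λ (z :: (A ++ B))) (z :: rest.flatten) :=
          (admissible_append.1 hadm2).2
        obtain ⟨segs'', hper'', hnest'', hsim''⟩ :=
          ih (orientAfter Λ (z :: (A ++ B))) z hsuf hper_rest hnest_rest
        rw [edges_orientAfter] at hsim''
        have hndU : (z :: (A ++ B)).Nodup := (List.perm_middle.nodup_iff).1 hndAB
        have memU : ∀ w : Fin n, w ∈ z :: (A ++ B) ↔ w ∈ L := fun w => by
          rw [hL]
          constructor <;> intro h <;>
            simp only [List.mem_cons, List.mem_append] at h ⊢ <;> tauto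
        have hmemF'' : ∀ w : Fin n, w ∈ segs''.flatten → w ∈ z :: (A ++ B) := by
          intro w hw
          have hw2 : w ∈ z :: rest.flatten := (sim_perm hsim'').mem_iff.2 hw
          rcases List.mem_cons.1 hw2 with rfl | hw2
          · exact List.mem_cons_self
          · exact (memU w).2 ((memL w).2 (List.mem_append.2 (Or.inr hw2)))
        refine ⟨(z :: (A ++ B)) :: segs'', ?_, ?_, ?_⟩
        · intro seg hs
          rcases List.mem_cons.1 hs with rfl | hs
          · exact ⟨List.cons_ne_nil _ _, hndU⟩
          · exact hper'' seg hs
        · intro i hi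
          cases i with
          | zero =>
              refine Set.ext fun w => ?_
              simp only [List.getD_cons_zero, List.drop_zero, List.flatten_cons, mem_suppOf,
                List.mem_append]
              constructor
              · exact fun h => Or.inl h
              · rintro (h | h)
                · exact h
                · exact hmemF'' w h
          | succ i =>
              have hi' : i < segs''.length := by simpa using hi
              have := hnest'' i hi'
              simpa using this
        · refine Relation.ReflTransGen.trans hslide ?_
          simp only [List.flatten_cons]
          exact sim_append_left _ hsim''
      · refine ⟨(z :: L) :: rest, ?_, ?_, ?_⟩
        · intro seg hs
          rcases List.mem_cons.1 hs with rfl | hs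
          · exact ⟨List.cons_ne_nil _ _, List.nodup_cons.2 ⟨hzL, hLnd⟩⟩
          · exact hper_rest seg hs
        · intro i hi
          cases i with
          | zero =>
              refine Set.ext fun w => ?_
              simp only [List.getD_cons_zero, List.drop_zero, List.flatten_cons, mem_suppOf,
                List.mem_cons, List.mem_append]
              have := memL w
              simp only [List.mem_append] at this
              tauto
          | succ i =>
              have hi' : i < rest.length := by simpa using hi
              have := hnest_rest i hi'
              simpa using this
        · simp only [List.flatten_cons, List.cons_append]
          exact Relation.ReflTransGen.refl

theorem exists_segments : ∀ (W : List (Fin n)) (Λ : Fin n → Fin n → ℕ),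
    Admissible Λ W → ∃ segs, Segments Λ W segs := by
  intro W
  induction W with
  | nil =>
      intro Λ _
      exact ⟨[], trivial, Relation.ReflTransGen.refl, by simp, by simp⟩
  | cons z W ih =>
      intro Λ hadm
      rw [admissible_cons] at hadm
      obtain ⟨hz, hW⟩ := hadm
      obtain ⟨segs₀, h₀⟩ := ih (flipO z Λ) hW
      have hadm1 : Admissible Λ (z :: segs₀.flatten) := admissible_cons.2 ⟨hz, h₀.1⟩
      obtain ⟨segs', hper, hnest, hsim⟩ := insert_seg segs₀ Λ z hadm1 h₀.2.2.1 h₀.2.2.2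
      refine ⟨segs', sim_admissible hsim hadm1, ?_, hper, hnest⟩
      have h1 : Sim (edges Λ) (z :: W) (z :: segs₀.flatten) := by
        have h2 := h₀.2.1
        rw [edges_flipO] at h2
        exact sim_cons z h2
      exact h1.trans hsim

end CanonExist

section PathHull

variable {n : ℕ} {Λ : Fin n → Fin n → ℕ} {x₁ : Fin n}

theorem sink_path_eq (hs : IsSink Λ x₁) {y : Fin n} (h : PathLE Λ x₁ y) : y = x₁ := by
  rcases Relation.ReflTransGen.cases_head h with rfl | ⟨b, hb, _⟩
  · rfl
  · exact absurd (hs b) hb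

theorem path_to_flip (hs : IsSink Λ x₁) {a y : Fin n} (hy : y ≠ x₁) (h : PathLE Λ a y) :
    PathLE (flipO x₁ Λ) a y := by
  induction h using Relation.ReflTransGen.head_induction_on with
  | refl => exact Relation.ReflTransGen.refl
  | head hab hrest ih =>
      rename_i a' b'
      have hb : b' ≠ x₁ := by
        rintro rfl
        exact hy (sink_path_eq hs hrest)
      have ha : a' ≠ x₁ := by
        rintro rfl
        exact hab (hs b')
      exact Relation.ReflTransGen.head (show flipO x₁ Λ a' b' ≠ 0 by rw [flipO_ne Λ ha hb]; exact hab) ih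

theorem flip_path_to (hs : IsSink Λ x₁) {a y : Fin n} (ha : a ≠ x₁)
    (h : PathLE (flipO x₁ Λ) a y) : PathLE Λ a y ∧ y ≠ x₁ := by
  revert ha
  induction h using Relation.ReflTransGen.head_induction_on with
  | refl => intro ha; exact ⟨Relation.ReflTransGen.refl, ha⟩
  | head hab hrest ih =>
      rename_i a' b'
      intro ha
      have hb : b' ≠ x₁ := by
        rintro rfl
        exact hab (by simp [flipO, hs a'])
      obtain ⟨hp, hy⟩ := ih hb
      exact ⟨Relation.ReflTransGen.head (by rwa [flipO_ne Λ ha hb] at hab) hp, hy⟩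

theorem flip_path_from_sink (hloopx : Λ x₁ x₁ = 0) (hs : IsSink Λ x₁) {y : Fin n}
    (h : PathLE (flipO x₁ Λ) x₁ y) :
    y = x₁ ∨ ∃ b, Λ b x₁ ≠ 0 ∧ b ≠ x₁ ∧ PathLE Λ b y ∧ y ≠ x₁ := by
  rcases Relation.ReflTransGen.cases_head h with rfl | ⟨b, hstep, hrest⟩
  · exact Or.inl rfl
  · right
    have hb : Λ b x₁ ≠ 0 := by simpa [flipO] using hstep
    have hbne : b ≠ x₁ := by rintro rfl; exact hb hloopx
    obtain ⟨hp, hy⟩ := flip_path_to hs hbne hrest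
    exact ⟨b, hb, hbne, hp, hy⟩

end PathHull

section HullLemmas

variable {n : ℕ} {Λ : Fin n → Fin n → ℕ} {x₁ : Fin n}

theorem mem_upSet {x y : Fin n} : y ∈ upSet Λ x ↔ PathLE Λ x y := Iff.rfl

theorem mem_hull {F : Set (Fin n)} {y : Fin n} :
    y ∈ hull Λ F ↔ ∃ a, (a ∈ F ∨ ∃ z ∈ F, edges Λ z a ≠ 0) ∧ PathLE Λ a y := Iff.rfl

theorem upSet_sink (hs : IsSink Λ x₁) : upSet Λ x₁ = {x₁} := by
  ext y
  constructor
  · intro h; exact sink_path_eq hs h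
  · rintro rfl; exact Relation.ReflTransGen.refl

theorem upSet_flip_self (hloopx : Λ x₁ x₁ = 0) (hs : IsSink Λ x₁) :
    upSet (flipO x₁ Λ) x₁ = hull Λ (upSet Λ x₁) := by
  ext y
  constructor
  · intro h
    rcases flip_path_from_sink hloopx hs h with hy1 | ⟨b, hb, hbne, hp, hy⟩
    · rw [hy1]
      exact ⟨x₁, Or.inl Relation.ReflTransGen.refl, Relation.ReflTransGen.refl⟩
    · refine ⟨b, Or.inr ⟨x₁, Relation.ReflTransGen.refl, ?_⟩, hp⟩
      unfold edges; omega
  · rintro ⟨a, ha, hp⟩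
    rcases ha with ha | ⟨z, hz, hza⟩
    · have ha' : a = x₁ := sink_path_eq hs ha
      rw [ha'] at hp
      have hy' : y = x₁ := sink_path_eq hs hp
      rw [hy']
      exact Relation.ReflTransGen.refl
    · have hz' : z = x₁ := sink_path_eq hs hz
      rw [hz'] at hza
      have haa : Λ a x₁ ≠ 0 := by have := hs a; unfold edges at hza; omega
      by_cases hyx : y = x₁
      · rw [hyx]; exact Relation.ReflTransGen.refl
      · refine Relation.ReflTransGen.head
          (show flipO x₁ Λ x₁ a ≠ 0 by simpa [flipO] using haa) (path_to_flip hs hyx hp)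

theorem upSet_flip_other (hs : IsSink Λ x₁) {x : Fin n} (hx : x ≠ x₁) :
    upSet (flipO x₁ Λ) x = upSet Λ x \ {x₁} := by
  ext y
  constructor
  · intro h
    obtain ⟨hp, hy⟩ := flip_path_to hs hx h
    exact ⟨hp, hy⟩
  · rintro ⟨hp, hy⟩
    exact path_to_flip hs hy hp

theorem hull_flip_of_nbhd (hloopx : Λ x₁ x₁ = 0) (hs : IsSink Λ x₁) {F : Set (Fin n)}
    (hF : x₁ ∈ F) (hN : ∀ v, edges Λ x₁ v ≠ 0 → v ∈ F) :
    hull (flipO x₁ Λ) F = hull Λ F := by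
  ext y
  simp only [mem_hull, edges_flipO]
  constructor
  · rintro ⟨a, ha, hp⟩
    by_cases hax : a = x₁
    · rw [hax] at hp
      rcases flip_path_from_sink hloopx hs hp with hy1 | ⟨b, hb, hbne, hpb, hy⟩
      · rw [hy1]
        exact ⟨x₁, Or.inl hF, Relation.ReflTransGen.refl⟩
      · refine ⟨b, Or.inl (hN b ?_), hpb⟩
        unfold edges; omega
    · exact ⟨a, ha, (flip_path_to hs hax hp).1⟩
  · rintro ⟨a, ha, hp⟩
    by_cases hyx : y = x₁
    · rw [hyx]; exact ⟨x₁, Or.inl hF, Relation.ReflTransGen.refl⟩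
    · exact ⟨a, ha, path_to_flip hs hyx hp⟩

theorem hull_flip_erase (hloopx : Λ x₁ x₁ = 0) (hs : IsSink Λ x₁) {F : Set (Fin n)}
    (hF : x₁ ∈ F) (hwit : ∃ z ∈ F, z ≠ x₁ ∧ edges Λ z x₁ ≠ 0) :
    hull (flipO x₁ Λ) (F \ {x₁}) = hull Λ F := by
  obtain ⟨z₀, hz₀F, hz₀ne, hz₀e⟩ := hwit
  have hx₁base : x₁ ∈ hull (flipO x₁ Λ) (F \ {x₁}) := by
    refine ⟨x₁, Or.inr ⟨z₀, ⟨hz₀F, hz₀ne⟩, ?_⟩, Relation.ReflTransGen.refl⟩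
    rw [edges_flipO]; exact hz₀e
  ext y
  constructor
  · rintro ⟨a, ha, hp⟩
    rw [edges_flipO] at ha
    by_cases hax : a = x₁
    · rw [hax] at hp
      rcases flip_path_from_sink hloopx hs hp with hy1 | ⟨b, hb, hbne, hpb, hy⟩
      · rw [hy1]
        exact ⟨x₁, Or.inl hF, Relation.ReflTransGen.refl⟩
      · refine ⟨b, Or.inr ⟨x₁, hF, ?_⟩, hpb⟩
        unfold edges; omega
    · refine ⟨a, ?_, (flip_path_to hs hax hp).1⟩
      rcases ha with ⟨haF, _⟩ | ⟨z, ⟨hzF, _⟩, hze⟩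
      · exact Or.inl haF
      · exact Or.inr ⟨z, hzF, hze⟩
  · rintro ⟨a, ha, hp⟩
    by_cases hyx : y = x₁
    · rw [hyx]; exact hx₁base
    · by_cases hax : a = x₁
      · rw [hax] at hp
        exact absurd (sink_path_eq hs hp) hyx
      · have hσp := path_to_flip hs hyx hp
        rcases ha with haF | ⟨z, hzF, hze⟩
        · exact ⟨a, Or.inl ⟨haF, hax⟩, hσp⟩
        · by_cases hzx : z = x₁
          · rw [hzx] at hze
            obtain ⟨a₀, ha₀, hp₀⟩ := hx₁base
            have hstep : flipO x₁ Λ x₁ a ≠ 0 := by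
              have := hs a; unfold edges at hze; simp [flipO]; omega
            exact ⟨a₀, ha₀, hp₀.trans (Relation.ReflTransGen.head hstep hσp)⟩
          · exact ⟨a, Or.inr ⟨z, ⟨hzF, hzx⟩, by rw [edges_flipO]; exact hze⟩, hσp⟩

theorem hull_flip_of_not_mem (hs : IsSink Λ x₁) {F : Set (Fin n)}
    (hx : x₁ ∉ hull Λ F) : hull (flipO x₁ Λ) F = hull Λ F := by
  have hxF : x₁ ∉ F := fun h => hx ⟨x₁, Or.inl h, Relation.ReflTransGen.refl⟩
  have hxN : ∀ z ∈ F, edges Λ z x₁ = 0 := by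
    intro z hz
    by_contra he
    exact hx ⟨x₁, Or.inr ⟨z, hz, he⟩, Relation.ReflTransGen.refl⟩
  ext y
  simp only [mem_hull, edges_flipO]
  constructor
  · rintro ⟨a, ha, hp⟩
    have hax : a ≠ x₁ := by
      rintro rfl
      rcases ha with h | ⟨z, hz, he⟩
      exacts [hxF h, he (hxN z hz)]
    exact ⟨a, ha, (flip_path_to hs hax hp).1⟩
  · rintro ⟨a, ha, hp⟩
    have hyx : y ≠ x₁ := by rintro rfl; exact hx ⟨a, ha, hp⟩
    exact ⟨a, ha, path_to_flip hs hyx hp⟩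

theorem hull_flip_diff (hs : IsSink Λ x₁) {F : Set (Fin n)}
    (hxF : x₁ ∉ F) (hxN : ∀ z ∈ F, edges Λ z x₁ = 0) :
    hull (flipO x₁ Λ) F = hull Λ F \ {x₁} := by
  ext y
  constructor
  · rintro ⟨a, ha, hp⟩
    rw [edges_flipO] at ha
    have hax : a ≠ x₁ := by
      rintro rfl
      rcases ha with h | ⟨z, hz, he⟩
      exacts [hxF h, he (hxN z hz)]
    obtain ⟨hp', hy⟩ := flip_path_to hs hax hp
    exact ⟨⟨a, ha, hp'⟩, hy⟩
  · rintro ⟨⟨a, ha, hp⟩, hy⟩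
    have hax : a ≠ x₁ := by
      rintro rfl
      rcases ha with h | ⟨z, hz, he⟩
      exacts [hxF h, he (hxN z hz)]
    exact ⟨a, by rw [edges_flipO]; exact ha, path_to_flip hs hy hp⟩

theorem exists_pred (hloop : ∀ a, Λ a a = 0) {a y : Fin n} (h : PathLE Λ a y) (hne : a ≠ y) :
    ∃ u, PathLE Λ a u ∧ Λ u y ≠ 0 ∧ u ≠ y := by
  rcases Relation.ReflTransGen.cases_tail h with rfl | ⟨u, hp, hstep⟩
  · exact absurd rfl hne
  · refine ⟨u, hp, hstep, ?_⟩
    rintro rfl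
    exact hstep (hloop u)

end HullLemmas

theorem master {n : ℕ} {Λ : Fin n → Fin n → ℕ} (hloop : ∀ a, Λ a a = 0)
    {r : ℕ} {x x₁ : Fin n} {T : List (Fin n)}
    (hx₁sink : IsSink Λ x₁) (hlen : 1 < (x₁ :: T).length)
    {segsS segsT : List (List (Fin n))}
    (hsegS : Segments Λ (x₁ :: T) segsS) (hP : PrincipalSegs Λ segsS r x)
    (hsegT : Segments (flipO x₁ Λ) T segsT) :
    suppOf (segsT.getD (segsT.length - 1) []) = upSet (flipO x₁ Λ) x ∧
    (x₁ = x → segsT.length = r - 1 ∧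
      ∀ i, 0 < i → i < r →
        suppOf (segsT.getD (i-1) []) = suppOf (segsS.getD (i-1) [])) ∧
    (x₁ ≠ x → segsT.length = r ∧
      (∀ i, 0 < i → i ≤ r → i ≠ (x₁ :: T).count x₁ →
        suppOf (segsT.getD (i-1) []) = suppOf (segsS.getD (i-1) [])) ∧
      suppOf (segsT.getD ((x₁ :: T).count x₁ - 1) []) =
        suppOf (segsS.getD ((x₁ :: T).count x₁ - 1) []) \ {x₁}) ∧
    PrincipalSegs (flipO x₁ Λ) segsT segsT.length x := by
  obtain ⟨hlenS, hr, hhull, hlast⟩ := hP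
  have hSmem : ∀ i, i < r → ∀ v : Fin n, (v ∈ segsS.getD i [] ↔ i < (x₁ :: T).count v) :=
    fun i hi v => segments_mem_iff hsegS (by rw [hlenS]; exact hi) v
  have hScle : ∀ v : Fin n, (x₁ :: T).count v ≤ r := fun v =>
    hlenS ▸ segments_count_le hsegS v
  have hTmem : ∀ i, i < segsT.length → ∀ v : Fin n,
      (v ∈ segsT.getD i [] ↔ i < T.count v) :=
    fun i hi v => segments_mem_iff hsegT hi v
  have hTcle : ∀ v : Fin n, T.count v ≤ segsT.length := segments_count_le hsegT
  have hcx₁ : (x₁ :: T).count x₁ = T.count x₁ + 1 := by simp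
  have hcne : ∀ v : Fin n, v ≠ x₁ → (x₁ :: T).count v = T.count v := by
    intro v hv; simp [List.count_cons, hv, Ne.symm hv]
  have hxS : x ∈ segsS.getD (r-1) [] := by
    have hx0 : x ∈ upSet Λ x := Relation.ReflTransGen.refl
    rw [← hlast] at hx0
    exact hx0
  have hxcount : (x₁ :: T).count x = r := by
    have h1 := (hSmem (r-1) (by omega) x).1 hxS
    have h2 := hScle x
    omega
  by_cases hxx : x₁ = x
  · -- Case A : x₁ = x
    subst hxx
    have hvne : ∀ v : Fin n, v ≠ x₁ → (x₁ :: T).count v ≤ r - 1 := by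
      intro v hv
      by_contra hcon
      push_neg at hcon
      have h1 : v ∈ segsS.getD (r-1) [] := (hSmem (r-1) (by omega) v).2 (by omega)
      have h2 : v ∈ upSet Λ x₁ := by rw [← hlast]; exact h1
      rw [upSet_sink hx₁sink] at h2
      exact hv h2
    have hr2 : 2 ≤ r := by
      by_contra hcon
      have hr1 : r = 1 := by omega
      cases T with
      | nil => simp at hlen
      | cons t T' =>
          by_cases htx : t = x₁
          · have h2 : 2 ≤ (x₁ :: t :: T').count x₁ := by
              rw [htx]; simp [List.count_cons]
            omega
          · have h1 : 1 ≤ (x₁ :: t :: T').count t :=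
              List.count_pos_iff.2 (by simp)
            have := hvne t htx
            omega
    have hTcx : T.count x₁ = r - 1 := by omega
    have hTle : ∀ v : Fin n, T.count v ≤ r - 1 := by
      intro v
      by_cases hv : v = x₁
      · rw [hv]; omega
      · have h1 := hvne v hv
        have h2 := hcne v hv
        omega
    have hlenT : segsT.length = r - 1 := by
      have h1 : r - 1 ≤ segsT.length := hTcx ▸ hTcle x₁
      rcases Nat.eq_zero_or_pos segsT.length with h0 | hpos
      · omega
      · have hne : segsT ≠ [] := by
          intro h
          rw [h] at hpos
          simp at hpos
        obtain ⟨v, hv⟩ := segments_exists_max hsegT hne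
        have := hTle v
        omega
    have comp2 : ∀ i, 0 < i → i < r →
        suppOf (segsT.getD (i-1) []) = suppOf (segsS.getD (i-1) []) := by
      intro i h0 hir
      refine Set.ext fun v => ?_
      rw [mem_suppOf, mem_suppOf, hTmem (i-1) (by omega) v, hSmem (i-1) (by omega) v]
      by_cases hv : v = x₁
      · rw [hv]; omega
      · have h1 := hcne v hv
        omega
    have hsupp_last : suppOf (segsT.getD (segsT.length - 1) [])
        = suppOf (segsS.getD (r-2) []) := by
      have hrw : segsT.length - 1 = r - 2 := by omega
      rw [hrw]
      refine Set.ext fun v => ?_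
      rw [mem_suppOf, mem_suppOf, hTmem (r-2) (by omega) v, hSmem (r-2) (by omega) v]
      by_cases hv : v = x₁
      · rw [hv]; omega
      · have h1 := hcne v hv
        omega
    have hchain : suppOf (segsS.getD (r-2) []) = upSet (flipO x₁ Λ) x₁ := by
      have h1 := hhull (r-2) (by omega)
      have e : r - 2 + 1 = r - 1 := by omega
      rw [e] at h1
      rw [h1, hlast]
      exact (upSet_flip_self (hloop x₁) hx₁sink).symm
    have comp1 : suppOf (segsT.getD (segsT.length - 1) []) = upSet (flipO x₁ Λ) x₁ :=
      hsupp_last.trans hchain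
    have comp4 : ∀ i, i + 1 < segsT.length →
        suppOf (segsT.getD i []) = hull (flipO x₁ Λ) (suppOf (segsT.getD (i+1) [])) := by
      intro i hi
      have hTi : suppOf (segsT.getD i []) = suppOf (segsS.getD i []) := by
        have := comp2 (i+1) (by omega) (by omega)
        simpa using this
      have hTi1 : suppOf (segsT.getD (i+1) []) = suppOf (segsS.getD (i+1) []) := by
        have := comp2 (i+2) (by omega) (by omega)
        simpa using this
      rw [hTi, hTi1, hhull i (by omega)]
      refine (hull_flip_of_nbhd (hloop x₁) hx₁sink ?_ ?_).symm
      · exact (hSmem (i+1) (by omega) x₁).2 (by omega)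
      · intro v he
        have h2 := hhull (i+1) (by omega)
        rw [h2]
        exact ⟨v, Or.inr ⟨x₁, (hSmem (i+2) (by omega) x₁).2 (by omega), he⟩,
          Relation.ReflTransGen.refl⟩
    exact ⟨comp1, fun _ => ⟨hlenT, comp2⟩, fun h => absurd rfl h,
      rfl, by omega, comp4, comp1⟩
  · -- Case B : x₁ ≠ x
    have hTcx : T.count x = r := by
      have := hcne x (fun h => hxx h.symm)
      omega
    set m := (x₁ :: T).count x₁ with hm
    have hm1 : 1 ≤ m := by omega
    have hmr : m ≤ r := hScle x₁
    have hTcx₁ : T.count x₁ = m - 1 := by omega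
    have hTle : ∀ v : Fin n, T.count v ≤ r := by
      intro v
      by_cases hv : v = x₁
      · rw [hv]; omega
      · have h1 := hcne v hv
        have h2 := hScle v
        omega
    have hlenT : segsT.length = r := by
      have h1 : r ≤ segsT.length := hTcx ▸ hTcle x
      have hne : segsT ≠ [] := by
        intro h
        rw [h] at h1
        simp at h1
        omega
      obtain ⟨v, hv⟩ := segments_exists_max hsegT hne
      have := hTle v
      omega
    have hkey : m < r → ∀ z, z ∈ segsS.getD m [] → edges Λ z x₁ = 0 := by
      intro hmlt z hzm
      by_contra he
      have hzc : m + 1 ≤ (x₁ :: T).count z := by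
        have := (hSmem m (by omega) z).1 hzm
        omega
      have hzne : z ≠ x₁ := by
        rintro rfl
        omega
      obtain ⟨P, Q, hPQ, hPn, _⟩ := sim_head_decomp (edges_comm Λ) hsegS.2.1
      have hzP : z ∉ P := fun hzP => he (hPn z hzP)
      have hadmF : Admissible Λ (P ++ x₁ :: Q) := hPQ ▸ hsegS.1
      have hsuf : Admissible (orientAfter Λ P) (x₁ :: Q) := (admissible_append.1 hadmF).2
      have hfol : (x₁ :: Q).count z ≤ (x₁ :: Q).count x₁ := by
        refine count_follow hsuf ?_ (Ne.symm hzne)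
        rw [edges_orientAfter, edges_comm]
        exact he
      have hcz : segsS.flatten.count z = (x₁ :: T).count z :=
        ((sim_perm hsegS.2.1).count_eq z).symm
      have hcx1' : segsS.flatten.count x₁ = (x₁ :: T).count x₁ :=
        ((sim_perm hsegS.2.1).count_eq x₁).symm
      rw [hPQ, List.count_append] at hcz hcx1'
      have hPz : P.count z = 0 := List.count_eq_zero.2 hzP
      omega
    have comp3a : ∀ i, 0 < i → i ≤ r → i ≠ m →
        suppOf (segsT.getD (i-1) []) = suppOf (segsS.getD (i-1) []) := by
      intro i h0 hir him
      refine Set.ext fun v => ?_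
      rw [mem_suppOf, mem_suppOf, hTmem (i-1) (by omega) v, hSmem (i-1) (by omega) v]
      by_cases hv : v = x₁
      · rw [hv]; omega
      · have h1 := hcne v hv
        omega
    have comp3b : suppOf (segsT.getD (m-1) [])
        = suppOf (segsS.getD (m-1) []) \ {x₁} := by
      refine Set.ext fun v => ?_
      simp only [Set.mem_diff, Set.mem_singleton_iff, mem_suppOf]
      rw [hTmem (m-1) (by omega) v, hSmem (m-1) (by omega) v]
      by_cases hv : v = x₁
      · rw [hv]
        constructor
        · intro h; exact absurd h (by omega)
        · rintro ⟨-, hne⟩; exact absurd rfl hne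
      · have h1 := hcne v hv
        constructor
        · intro h; exact ⟨by omega, hv⟩
        · rintro ⟨h, -⟩; omega
    have comp1 : suppOf (segsT.getD (segsT.length - 1) []) = upSet (flipO x₁ Λ) x := by
      rw [upSet_flip_other hx₁sink (fun h => hxx h.symm), ← hlast, hlenT]
      refine Set.ext fun v => ?_
      simp only [Set.mem_diff, Set.mem_singleton_iff, mem_suppOf]
      rw [hTmem (r-1) (by omega) v, hSmem (r-1) (by omega) v]
      by_cases hv : v = x₁
      · rw [hv]
        constructor
        · intro h; exact absurd h (by omega)
        · rintro ⟨-, hne⟩; exact absurd rfl hne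
      · have h1 := hcne v hv
        constructor
        · intro h; exact ⟨by omega, hv⟩
        · rintro ⟨h, -⟩; omega
    have hTS : ∀ j, j < r → j ≠ m - 1 →
        suppOf (segsT.getD j []) = suppOf (segsS.getD j []) := by
      intro j hj hjm
      have := comp3a (j+1) (by omega) (by omega) (by omega)
      simpa using this
    have hullcond : ∀ i, i + 1 < segsT.length →
        suppOf (segsT.getD i []) = hull (flipO x₁ Λ) (suppOf (segsT.getD (i+1) [])) := by
      intro i hi
      rw [hlenT] at hi
      rcases Nat.lt_trichotomy (i+1) m with hlt | heq | hgt
      · rcases eq_or_ne (i+2) m with heq2 | hne2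
        · -- i+1 = m-1
          have hTi : suppOf (segsT.getD i []) = suppOf (segsS.getD i []) :=
            hTS i (by omega) (by omega)
          have hTi1 : suppOf (segsT.getD (i+1) [])
              = suppOf (segsS.getD (i+1) []) \ {x₁} := by
            have e : i + 1 = m - 1 := by omega
            rw [e]
            exact comp3b
          rw [hTi, hTi1]
          have hwit : ∃ z ∈ suppOf (segsS.getD (i+1) []), z ≠ x₁ ∧ edges Λ z x₁ ≠ 0 := by
            rcases eq_or_ne m r with hmr' | hmr'
            · have hx₁mem : PathLE Λ x x₁ := by
                have h3 : x₁ ∈ suppOf (segsS.getD (r-1) []) :=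
                  (hSmem (r-1) (by omega) x₁).2 (by omega)
                rw [hlast] at h3
                exact h3
              obtain ⟨u, hpu, hue, hune⟩ := exists_pred hloop hx₁mem
                (fun h => hxx h.symm)
              refine ⟨u, ?_, hune, by unfold edges; omega⟩
              have e : i + 1 = r - 1 := by omega
              rw [e, hlast]
              exact hpu
            · have hmlt : m < r := by omega
              have hFh : suppOf (segsS.getD (m-1) [])
                  = hull Λ (suppOf (segsS.getD (m-1+1) [])) := hhull (m-1) (by omega)
              have em : m - 1 + 1 = m := by omega
              rw [em] at hFh
              have hx₁F : x₁ ∈ suppOf (segsS.getD (m-1) []) :=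
                (hSmem (m-1) (by omega) x₁).2 (by omega)
              rw [hFh] at hx₁F
              obtain ⟨a, ha, hpa⟩ := hx₁F
              by_cases hax : a = x₁
              · rw [hax] at ha
                rcases ha with hmem | ⟨z, hzF, hze⟩
                · have := (hSmem m (by omega) x₁).1 hmem
                  omega
                · exact absurd (hkey hmlt z hzF) hze
              · obtain ⟨u, hpu, hue, hune⟩ := exists_pred hloop hpa hax
                refine ⟨u, ?_, hune, by unfold edges; omega⟩
                have e : i + 1 = m - 1 := by omega
                rw [e, hFh]
                exact ⟨a, ha, hpu⟩
          have hx₁F : x₁ ∈ suppOf (segsS.getD (i+1) []) :=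
            (hSmem (i+1) (by omega) x₁).2 (by omega)
          rw [hull_flip_erase (hloop x₁) hx₁sink hx₁F hwit]
          exact hhull i (by omega)
        · -- i+2 < m
          have hTi : suppOf (segsT.getD i []) = suppOf (segsS.getD i []) :=
            hTS i (by omega) (by omega)
          have hTi1 : suppOf (segsT.getD (i+1) []) = suppOf (segsS.getD (i+1) []) :=
            hTS (i+1) (by omega) (by omega)
          rw [hTi, hTi1, hhull i (by omega)]
          refine (hull_flip_of_nbhd (hloop x₁) hx₁sink ?_ ?_).symm
          · exact (hSmem (i+1) (by omega) x₁).2 (by omega)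
          · intro v he
            have h2 := hhull (i+1) (by omega)
            rw [h2]
            exact ⟨v, Or.inr ⟨x₁, (hSmem (i+2) (by omega) x₁).2 (by omega), he⟩,
              Relation.ReflTransGen.refl⟩
      · -- i+1 = m
        have hTi : suppOf (segsT.getD i []) = suppOf (segsS.getD i []) \ {x₁} := by
          have e : i = m - 1 := by omega
          rw [e]
          exact comp3b
        have hTi1 : suppOf (segsT.getD (i+1) []) = suppOf (segsS.getD (i+1) []) :=
          hTS (i+1) (by omega) (by omega)
        rw [hTi, hTi1]
        have hd := hull_flip_diff hx₁sink (F := suppOf (segsS.getD (i+1) []))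
          (by
            intro hmem
            have := (hSmem (i+1) (by omega) x₁).1 hmem
            omega)
          (by
            intro z hz
            refine hkey (by omega) z ?_
            have e : m = i + 1 := by omega
            rw [e]
            exact mem_suppOf.1 hz)
        rw [hd, ← hhull i (by omega)]
      · -- i+1 > m
        have hTi : suppOf (segsT.getD i []) = suppOf (segsS.getD i []) :=
          hTS i (by omega) (by omega)
        have hTi1 : suppOf (segsT.getD (i+1) []) = suppOf (segsS.getD (i+1) []) :=
          hTS (i+1) (by omega) (by omega)
        rw [hTi, hTi1, hhull i (by omega)]
        refine (hull_flip_of_not_mem hx₁sink ?_).symm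
        rw [← hhull i (by omega)]
        intro hmem
        have := (hSmem i (by omega) x₁).1 hmem
        omega
    exact ⟨comp1, fun h => absurd h hxx, fun _ => ⟨hlenT, comp3a, comp3b⟩,
      rfl, by omega, hullcond, comp1⟩


theorem principal_tail
    (n : ℕ) (hn : 2 ≤ n) (Λ : Fin n → Fin n → ℕ)
    (hloop : ∀ a, Λ a a = 0)
    (hconn : ∀ a b : Fin n, Relation.ReflTransGen (fun u v => edges Λ u v ≠ 0) a b)
    (hacyc : ∀ a : Fin n, ¬ Relation.TransGen (fun u v => Λ u v ≠ 0) a a)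
    (r : ℕ) (x x₁ : Fin n) (S T : List (Fin n))
    (hadm : Admissible Λ S) (hlen : 1 < S.length) (hcons : S = x₁ :: T)
    (hprin : IsPrincipalSeq Λ r x S) :
    Admissible (flipO x₁ Λ) T ∧ IsPrincipal (flipO x₁ Λ) T ∧
    ∀ segsS segsT : List (List (Fin n)),
      Segments Λ S segsS → PrincipalSegs Λ segsS r x →
      Segments (flipO x₁ Λ) T segsT →
      suppOf (segsT.getD (segsT.length - 1) []) = upSet (flipO x₁ Λ) x ∧
      (x₁ = x → segsT.length = r - 1 ∧
        ∀ i, 0 < i → i < r →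
          suppOf (segsT.getD (i-1) []) = suppOf (segsS.getD (i-1) [])) ∧
      (x₁ ≠ x → segsT.length = r ∧
        (∀ i, 0 < i → i ≤ r → i ≠ S.count x₁ →
          suppOf (segsT.getD (i-1) []) = suppOf (segsS.getD (i-1) [])) ∧
        suppOf (segsT.getD (S.count x₁ - 1) []) =
          suppOf (segsS.getD (S.count x₁ - 1) []) \ {x₁}) := by
  subst hcons
  rw [admissible_cons] at hadm
  obtain ⟨hx₁sink, hTadm⟩ := hadm
  refine ⟨hTadm, ?_, ?_⟩
  · obtain ⟨segsS, hsegS, hP⟩ := hprin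
    obtain ⟨segsT, hsegT⟩ := exists_segments T (flipO x₁ Λ) hTadm
    obtain ⟨-, -, -, hps⟩ := master hloop hx₁sink hlen hsegS hP hsegT
    exact ⟨segsT.length, x, segsT, hsegT, hps⟩
  · intro segsS segsT hsegS hP hsegT
    obtain ⟨h1, h2, h3, -⟩ := master hloop hx₁sink hlen hsegS hP hsegT
    exact ⟨h1, h2, h3⟩

end KP
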